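/- For every r ≥ 1 there exists a 1-D cellular automaton A of radius r over the alphabet Σ = {⊥} ∪ {a₋ᵣ,…,a₋₁, a₁,…,aᵣ} (2r non-quiescent symbols) and a finite initial configuration c₀ = ⊥^ω a₋ᵣ ⋯ a₋₁ a₁ ⋯ aᵣ ⊥^ω such that for all n ≥ 0, G^n(c₀) = ⊥^ω a₋ᵣ^{n+1} ⋯ a₋₁^{n+1} a₁^{n+1} ⋯ aᵣ^{n+1} ⊥^ω. Hence the language { a₋ᵣⁿ ⋯ a₋₁ⁿ a₁ⁿ ⋯ aᵣⁿ | n ≥ 1 } is generated by a radius-r CA. -/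

import Mathlib

def glob {α : Type*} (r : ℕ) (f : (Fin (2 * r + 1) → α) → α) (c : ℤ → α) : ℤ → α :=
  fun z => f (fun j => c (z + (j.val : ℤ) - (r : ℤ)))

def padW {α : Type*} (bot : α) (w : List α) : ℤ → α :=
  fun z => if 0 ≤ z ∧ z < (w.length : ℤ) then w.getD z.toNat bot else bot

def blockWord (r m : ℕ) : List (Option (Fin (2 * r))) :=
  ((List.finRange (2 * r)).map (fun k => List.replicate m (some k))).flatten

namespace Stmt11

lemma flatten_getD {α : Type*} (d : α) (m : ℕ) :
    ∀ (L : List (List α)), (∀ l ∈ L, l.length = m) → ∀ i : ℕ, i < L.length * m →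
      L.flatten.getD i d = (L.getD (i / m) []).getD (i % m) d := by
  intro L
  induction L with
  | nil => intro _ i hi; simp at hi
  | cons a L ih =>
    intro h i hi
    rcases Nat.eq_zero_or_pos m with hm0 | hm0
    · subst hm0; simp at hi
    have ha : a.length = m := h a (by simp)
    have hlen : (a :: L).length * m = L.length * m + m := by
      simp [List.length_cons]; ring
    by_cases him : i < m
    · have h0 : i / m = 0 := Nat.div_eq_of_lt him
      have h1 : i % m = i := Nat.mod_eq_of_lt him
      rw [List.flatten_cons, List.getD_append _ _ _ _ (show i < a.length by omega), h0, h1]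
      simp
    · have h0 : i / m = (i - m) / m + 1 := Nat.div_eq_sub_div hm0 (by omega)
      have h1 : i % m = (i - m) % m := Nat.mod_eq_sub_mod (by omega)
      rw [List.flatten_cons,
        List.getD_append_right _ _ _ _ (show a.length ≤ i by omega), h0, h1, ha]
      have hi' : i - m < L.length * m := by
        have h2 : i < L.length * m + m := hlen ▸ hi
        omega
      rw [ih (fun l hl => h l (by simp [hl])) (i - m) hi']
      simp

lemma bw_length (r m : ℕ) : (blockWord r m).length = 2 * r * m := by
  rw [blockWord, List.length_flatten, List.map_map]
  simp [Function.comp_def, List.map_const', List.sum_replicate]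

lemma bw_getD (r m : ℕ) (j : ℕ) (hj : j < 2 * r * m) (hm : 1 ≤ m) :
    (blockWord r m).getD j none = some ⟨j / m, by
      rw [Nat.div_lt_iff_lt_mul (by omega)]; omega⟩ := by
  have hjm : j / m < 2 * r := by rw [Nat.div_lt_iff_lt_mul (by omega)]; omega
  have h1 : (List.map (fun k => List.replicate m (some k)) (List.finRange (2 * r))).getD
      (j / m) [] = List.replicate m (some (⟨j / m, hjm⟩ : Fin (2 * r))) := by
    rw [List.getD_eq_getElem _ _ (by simpa using hjm), List.getElem_map]
    congr 1
    simp [List.getElem_finRange]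
  rw [blockWord, flatten_getD _ m _ (by simp) j (by simpa using hj), h1,
    List.getD_eq_getElem _ _ (by simpa using Nat.mod_lt j (show 0 < m by omega)),
    List.getElem_replicate]

def cfg (r m : ℕ) : ℤ → Option (Fin (2 * r)) :=
  fun z => padW none (blockWord r m) (z + (r : ℤ) * m)

lemma pad_char (r m : ℕ) (hm : 1 ≤ m) (z : ℤ) (k : Fin (2 * r)) :
    padW none (blockWord r m) z = some k ↔
      (k : ℤ) * m ≤ z ∧ z < ((k : ℤ) + 1) * m := by
  rw [padW, bw_length]
  by_cases hz : 0 ≤ z ∧ z < ((2 * r * m : ℕ) : ℤ)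
  · rw [if_pos hz]
    have hzn : z.toNat < 2 * r * m := by omega
    rw [bw_getD r m z.toNat hzn hm]
    rw [Option.some_inj, Fin.ext_iff]
    have hdiv : z.toNat / m = (k : ℕ) ↔ (k : ℕ) * m ≤ z.toNat ∧ z.toNat < ((k : ℕ) + 1) * m := by
      constructor
      · intro hq
        rw [← hq]
        have e := Nat.div_add_mod z.toNat m
        have hmod : z.toNat % m < m := Nat.mod_lt _ (by omega)
        exact ⟨Nat.div_mul_le_self _ _, by nlinarith⟩
      · rintro ⟨h1, h2⟩
        exact Nat.div_eq_of_lt_le h1 h2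
    rw [hdiv]
    have c1 : (((k : ℕ) * m : ℕ) : ℤ) = (k : ℤ) * m := by push_cast; ring
    have c2 : ((((k : ℕ) + 1) * m : ℕ) : ℤ) = ((k : ℤ) + 1) * m := by push_cast; ring
    omega
  · rw [if_neg hz]
    constructor
    · intro h; exact absurd h (by simp)
    · rintro ⟨h1, h2⟩
      exfalso
      have hk0 : (0 : ℤ) ≤ (k : ℤ) * m := by positivity
      have hk1 : ((k : ℤ) + 1) * m ≤ ((2 * r * m : ℕ) : ℤ) := by
        have : (k : ℤ) + 1 ≤ 2 * r := by exact_mod_cast k.isLt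
        push_cast
        nlinarith [show (0:ℤ) ≤ (m:ℤ) by positivity]
      omega


lemma cfg_char (r m : ℕ) (hm : 1 ≤ m) (z : ℤ) (k : Fin (2 * r)) :
    cfg r m z = some k ↔
      ((k : ℤ) - r) * m ≤ z ∧ z < ((k : ℤ) - r + 1) * m := by
  rw [cfg, pad_char r m hm]
  have e1 : ((k : ℤ) - r) * m = (k : ℤ) * m - r * m := by ring
  have e2 : ((k : ℤ) - r + 1) * m = ((k : ℤ) + 1) * m - r * m := by ring
  constructor <;> rintro ⟨h1, h2⟩ <;> exact ⟨by linarith, by linarith⟩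

noncomputable def rule (r : ℕ) (w : Fin (2 * r + 1) → Option (Fin (2 * r))) : Option (Fin (2 * r)) :=
  if h : ∃ k : Fin (2 * r),
      w ⟨2 * r - 1 - (k : ℕ), by omega⟩ = some k ∨ w ⟨2 * r - (k : ℕ), by omega⟩ = some k
  then some h.choose else none

lemma rule_none (r : ℕ) : rule r (fun _ => none) = none := by
  rw [rule, dif_neg]
  rintro ⟨k, hk | hk⟩ <;> exact Option.some_ne_none k hk.symm

lemma cfg_iff (r m : ℕ) (hm : 1 ≤ m) (z : ℤ) (k : Fin (2 * r)) :
    cfg r (m + 1) z = some k ↔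
      cfg r m (z - ((k : ℤ) - r + 1)) = some k ∨ cfg r m (z - ((k : ℤ) - r)) = some k := by
  rw [cfg_char r (m + 1) (by omega), cfg_char r m hm, cfg_char r m hm]
  have hm' : (1 : ℤ) ≤ (m : ℤ) := by exact_mod_cast hm
  set a : ℤ := (k : ℤ) - r with ha
  have e1 : a * ((m : ℕ) + 1 : ℕ) = a * m + a := by push_cast; ring
  have e2 : (a + 1) * ((m : ℕ) + 1 : ℕ) = a * m + m + a + 1 := by push_cast; ring
  have e3 : (a + 1) * m = a * m + m := by ring
  rw [e1, e2, e3]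
  generalize a * (m : ℤ) = A
  omega

lemma step (r m : ℕ) (hm : 1 ≤ m) :
    glob r (rule r) (cfg r m) = cfg r (m + 1) := by
  funext z
  show rule r (fun j => cfg r m (z + ((j : ℕ) : ℤ) - r)) = cfg r (m + 1) z
  set w : Fin (2 * r + 1) → Option (Fin (2 * r)) :=
    fun j => cfg r m (z + ((j : ℕ) : ℤ) - r) with hw
  have hP : ∀ k : Fin (2 * r),
      (w ⟨2 * r - 1 - (k : ℕ), by omega⟩ = some k ∨ w ⟨2 * r - (k : ℕ), by omega⟩ = some k)
        ↔ cfg r (m + 1) z = some k := by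
    intro k
    have hk := k.isLt
    have i1 : z + ((2 * r - 1 - (k : ℕ) : ℕ) : ℤ) - r = z - ((k : ℤ) - r + 1) := by
      have hc : (((k : ℕ) : ℤ)) = (k : ℤ) := by norm_cast
      omega
    have i2 : z + ((2 * r - (k : ℕ) : ℕ) : ℤ) - r = z - ((k : ℤ) - r) := by
      have hc : (((k : ℕ) : ℤ)) = (k : ℤ) := by norm_cast
      omega
    simp only [hw]
    rw [i1, i2, cfg_iff r m hm z k]
  by_cases hz : ∃ k, cfg r (m + 1) z = some k
  · obtain ⟨k, hk⟩ := hz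
    have hex : ∃ k : Fin (2 * r),
        w ⟨2 * r - 1 - (k : ℕ), by omega⟩ = some k ∨ w ⟨2 * r - (k : ℕ), by omega⟩ = some k :=
      ⟨k, (hP k).mpr hk⟩
    simp only [rule]
    rw [dif_pos hex, hk]
    have h2 : cfg r (m + 1) z = some hex.choose := (hP _).mp hex.choose_spec
    rw [hk] at h2
    exact h2.symm
  · have hnone : cfg r (m + 1) z = none := by
      cases hcc : cfg r (m + 1) z with
      | none => rfl
      | some k => exact absurd ⟨k, hcc⟩ hz
    rw [hnone]
    simp only [rule]
    rw [dif_neg]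
    rintro ⟨k, hk⟩
    exact hz ⟨k, (hP k).mp hk⟩

lemma glob_shift {α : Type*} (r : ℕ) (f : (Fin (2 * r + 1) → α) → α) (c : ℤ → α) (t : ℤ) :
    glob r f (fun z => c (z + t)) = fun z => glob r f c (z + t) := by
  funext z
  rw [glob, glob]
  congr 1
  funext j
  congr 1
  ring

lemma glob_iterate_shift {α : Type*} (r : ℕ) (f : (Fin (2 * r + 1) → α) → α) (c : ℤ → α)
    (t : ℤ) (n : ℕ) :
    (glob r f)^[n] (fun z => c (z + t)) = fun z => ((glob r f)^[n] c) (z + t) := by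
  induction n with
  | zero => rfl
  | succ n ih =>
    rw [Function.iterate_succ_apply', ih, glob_shift]
    funext z
    rw [Function.iterate_succ_apply']

lemma iterate_cfg (r : ℕ) (n : ℕ) :
    (glob r (rule r))^[n] (cfg r 1) = cfg r (n + 1) := by
  induction n with
  | zero => rfl
  | succ n ih => rw [Function.iterate_succ_apply', ih, step r (n + 1) (by omega)]

lemma key (r : ℕ) (n : ℕ) (z : ℤ) :
    (glob r (rule r))^[n] (padW none (blockWord r 1)) z
      = padW none (blockWord r (n + 1)) (z + (r : ℤ) * n) := by
  have h0 : padW none (blockWord r 1) = fun z => cfg r 1 (z + (-(r : ℤ))) := by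
    funext x
    rw [cfg]
    congr 1
    push_cast
    ring
  rw [h0, glob_iterate_shift, iterate_cfg]
  simp only [cfg]
  congr 1
  push_cast
  ring

lemma pad_ne {α : Type*} (bot : α) (u : List α) (hu : bot ∉ u) (y : ℤ) :
    padW bot u y ≠ bot ↔ 0 ≤ y ∧ y < (u.length : ℤ) := by
  rw [padW]
  by_cases h : 0 ≤ y ∧ y < (u.length : ℤ)
  · rw [if_pos h]
    have hy : y.toNat < u.length := by omega
    constructor
    · intro _; exact h
    · intro _
      rw [List.getD_eq_getElem _ _ hy]
      exact fun hb => hu (hb ▸ List.getElem_mem hy)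
  · rw [if_neg h]
    constructor
    · intro hbb; exact absurd rfl hbb
    · intro hy; exact absurd hy h

lemma pad_unique {α : Type*} (bot : α) (w v : List α) (hw : bot ∉ w) (hv : bot ∉ v)
    (hvne : v ≠ []) (s t : ℤ) (h : ∀ z, padW bot w (z - s) = padW bot v (z - t)) : w = v := by
  have hvlen : 0 < v.length := List.length_pos_iff.mpr hvne
  have hvlen' : (0 : ℤ) < (v.length : ℤ) := by exact_mod_cast hvlen
  have h1 : ∀ y : ℤ, (0 ≤ y ∧ y < (w.length : ℤ)) ↔
      (0 ≤ y + s - t ∧ y + s - t < (v.length : ℤ)) := by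
    intro y
    rw [← pad_ne bot w hw y, ← pad_ne bot v hv (y + s - t)]
    have hz := h (y + s)
    rw [show y + s - s = y by ring] at hz
    rw [hz]
  have hd1 : 0 ≤ t - s ∧ t - s < (w.length : ℤ) := by
    have := (h1 (t - s)).mpr ⟨by omega, by omega⟩
    exact this
  have hwlen : 0 < w.length := by omega
  have hd2 : 0 ≤ s - t := by
    have := (h1 0).mp ⟨le_refl 0, by omega⟩
    omega
  have hst : s = t := by omega
  subst hst
  have hlen : w.length = v.length := by
    have a := (h1 ((w.length : ℤ) - 1)).mp ⟨by omega, by omega⟩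
    have b := (h1 ((v.length : ℤ) - 1)).mpr ⟨by omega, by omega⟩
    omega
  apply List.ext_getElem hlen
  intro i hi1 hi2
  have hthis := h ((i : ℤ) + s)
  rw [show (i : ℤ) + s - s = (i : ℤ) by ring] at hthis
  have c1 : (0 : ℤ) ≤ (i : ℤ) ∧ (i : ℤ) < (w.length : ℤ) := ⟨by positivity, by exact_mod_cast hi1⟩
  have c2 : (0 : ℤ) ≤ (i : ℤ) ∧ (i : ℤ) < (v.length : ℤ) := ⟨by positivity, by exact_mod_cast hi2⟩
  rw [padW, padW, if_pos c1, if_pos c2, Int.toNat_natCast,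
    List.getD_eq_getElem _ _ hi1, List.getD_eq_getElem _ _ hi2] at hthis
  exact hthis

lemma none_not_mem_bw (r m : ℕ) : none ∉ blockWord r m := by
  intro hmem
  rw [blockWord, List.mem_flatten] at hmem
  obtain ⟨l, hl, hnl⟩ := hmem
  rw [List.mem_map] at hl
  obtain ⟨k, _, rfl⟩ := hl
  rw [List.mem_replicate] at hnl
  exact Option.some_ne_none k hnl.2.symm

lemma bw_ne_nil (r m : ℕ) (hr : 1 ≤ r) (hm : 1 ≤ m) : blockWord r m ≠ [] := by
  intro hnil
  have := bw_length r m
  rw [hnil] at this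
  simp at this
  omega

end Stmt11

theorem stmt11 (r : ℕ) (hr : 1 ≤ r) :
    ∃ f : (Fin (2 * r + 1) → Option (Fin (2 * r))) → Option (Fin (2 * r)),
      f (fun _ => none) = none ∧
      (∀ n : ℕ, ∃ s : ℤ, ∀ z : ℤ,
        (glob r f)^[n] (padW none (blockWord r 1)) z = padW none (blockWord r (n + 1)) (z - s)) ∧
      ({ w : List (Option (Fin (2 * r))) | none ∉ w ∧
          ∃ (n : ℕ) (s : ℤ), ∀ z : ℤ,
            (glob r f)^[n] (padW none (blockWord r 1)) z = padW none w (z - s) }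
        = { w : List (Option (Fin (2 * r))) | ∃ m : ℕ, 1 ≤ m ∧ w = blockWord r m }) := by
  refine ⟨Stmt11.rule r, Stmt11.rule_none r, ?_, ?_⟩
  · intro n
    refine ⟨-((r : ℤ) * n), fun z => ?_⟩
    rw [Stmt11.key r n z]
    congr 1
    ring
  · ext w
    simp only [Set.mem_setOf_eq]
    constructor
    · rintro ⟨hnone, n, s, hws⟩
      refine ⟨n + 1, by omega, ?_⟩
      refine Stmt11.pad_unique none w (blockWord r (n + 1)) hnone
        (Stmt11.none_not_mem_bw r (n + 1)) (Stmt11.bw_ne_nil r (n + 1) hr (by omega))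
        s (-((r : ℤ) * n)) ?_
      intro z
      rw [← hws z, Stmt11.key r n z]
      congr 1
      ring
    · rintro ⟨m, hm, rfl⟩
      refine ⟨Stmt11.none_not_mem_bw r m, m - 1, -((r : ℤ) * ((m - 1 : ℕ) : ℤ)), fun z => ?_⟩
      rw [Stmt11.key r (m - 1) z, show m - 1 + 1 = m from by omega]
      congr 1
      ring
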